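/- arXiv:1204.5308 — 4 statements merged into one kernel-verified Lean document; each statement's English description precedes it below -/
import Mathlib

section
/- Let A, B ⊆ S^3 be compact convex sets such that A ∪ B contains no pair of antipodal points. Then Join(A, B) is convex. -/
open Metric

noncomputable section

/-- The join of two subsets of S³ (points represented by unit vectors of
`EuclideanSpace ℝ (Fin 4)`). -/
def sJoin (A B : Set (EuclideanSpace ℝ (Fin 4))) : Set (EuclideanSpace ℝ (Fin 4)) :=
  {u | ∃ a ∈ A, ∃ b ∈ B, ∃ c₁ c₂ : ℝ, 0 ≤ c₁ ∧ 0 ≤ c₂ ∧ c₁ • a + c₂ • b ≠ 0 ∧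
    u = ‖c₁ • a + c₂ • b‖⁻¹ • (c₁ • a + c₂ • b)}

/-- Spherical convexity: every pair of points of C is joined inside C by a
great-circle geodesic segment of length θ ≤ π, parametrized as
t ↦ cos(tθ)·u + sin(tθ)·q with q a unit vector orthogonal to u. -/
def SConvex (C : Set (EuclideanSpace ℝ (Fin 4))) : Prop :=
  ∀ u ∈ C, ∀ v ∈ C, ∃ (θ : ℝ) (q : EuclideanSpace ℝ (Fin 4)),
    0 ≤ θ ∧ θ ≤ Real.pi ∧ ‖q‖ = 1 ∧ (inner ℝ u q : ℝ) = 0 ∧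
    v = Real.cos θ • u + Real.sin θ • q ∧
    ∀ t ∈ Set.Icc (0 : ℝ) 1, Real.cos (t * θ) • u + Real.sin (t * θ) • q ∈ C

local notation "E4" => EuclideanSpace ℝ (Fin 4)

lemma norm_combo_sq {a q : E4} (ha : ‖a‖ = 1) (hq : ‖q‖ = 1)
    (horth : (inner ℝ a q : ℝ) = 0) (x y : ℝ) : ‖x • a + y • q‖ ^ 2 = x ^ 2 + y ^ 2 := by
  rw [norm_add_sq_real, real_inner_smul_left, real_inner_smul_right, horth,
    norm_smul, norm_smul, ha, hq]
  simp [mul_pow, sq_abs]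

lemma exists_unit_orthogonal (u : E4) :
    ∃ q : E4, ‖q‖ = 1 ∧ (inner ℝ u q : ℝ) = 0 := by
  by_cases hu : u = 0
  · refine ⟨EuclideanSpace.single 0 1, ?_, ?_⟩
    · simp [EuclideanSpace.norm_single]
    · simp [hu]
  · have hne : ((ℝ ∙ u)ᗮ : Submodule ℝ E4) ≠ ⊥ := by
      intro hbot
      have h1 : Module.finrank ℝ (ℝ ∙ u : Submodule ℝ E4) = 1 :=
        finrank_span_singleton hu
      have h2 := Submodule.finrank_add_finrank_orthogonal (K := (ℝ ∙ u : Submodule ℝ E4))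
      rw [hbot, h1] at h2
      simp [finrank_euclideanSpace] at h2
    obtain ⟨w, hw, hw0⟩ := Submodule.exists_mem_ne_zero_of_ne_bot hne
    refine ⟨‖w‖⁻¹ • w, ?_, ?_⟩
    · rw [norm_smul, norm_inv, norm_norm, inv_mul_cancel₀ (norm_ne_zero_iff.2 hw0)]
    · rw [real_inner_smul_right]
      have := (Submodule.mem_orthogonal_singleton_iff_inner_right (𝕜 := ℝ)).1 hw
      rw [this, mul_zero]

lemma combo_eq_zero {A : Set E4} (hAs : A ⊆ sphere 0 1) (hant : ∀ p ∈ A, -p ∉ A)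
    {a a' : E4} (ha : a ∈ A) (ha' : a' ∈ A) {α β : ℝ} (hα : 0 ≤ α) (hβ : 0 ≤ β)
    (h : α • a + β • a' = 0) : α = 0 ∧ β = 0 := by
  have hna : ‖a‖ = 1 := mem_sphere_zero_iff_norm.1 (hAs ha)
  have hna' : ‖a'‖ = 1 := mem_sphere_zero_iff_norm.1 (hAs ha')
  have heq : α • a = -(β • a') := eq_neg_of_add_eq_zero_left h
  have hnorm : α = β := by
    have := congrArg norm heq
    rwa [norm_neg, norm_smul, norm_smul, hna, hna', mul_one, mul_one,
      Real.norm_eq_abs, Real.norm_eq_abs, abs_of_nonneg hα, abs_of_nonneg hβ] at this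
  rcases eq_or_lt_of_le hα with h0 | h0
  · refine ⟨h0.symm, ?_⟩; rw [← hnorm, ← h0]
  · exfalso
    have haa : a = -a' := by
      have : α • a = α • (-a') := by rw [heq, hnorm, smul_neg]
      exact smul_right_injective _ h0.ne' this
    exact hant a' ha' (haa ▸ ha)

lemma arccos_le_arccos' {x y : ℝ} (h : x ≤ y) : Real.arccos y ≤ Real.arccos x := by
  rw [Real.arccos_eq_pi_div_two_sub_arcsin, Real.arccos_eq_pi_div_two_sub_arcsin]
  exact sub_le_sub_left (Real.monotone_arcsin h) _

set_option maxHeartbeats 1600000 in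
lemma sconvex_normalize_mem {A : Set E4}
    (hAs : A ⊆ sphere 0 1) (hconv : SConvex A) (hant : ∀ p ∈ A, -p ∉ A)
    {a a' : E4} (ha : a ∈ A) (ha' : a' ∈ A)
    {α β : ℝ} (hα : 0 ≤ α) (hβ : 0 ≤ β) (hw : α • a + β • a' ≠ 0) :
    ‖α • a + β • a'‖⁻¹ • (α • a + β • a') ∈ A := by
  have hna : ‖a‖ = 1 := mem_sphere_zero_iff_norm.1 (hAs ha)
  have hna' : ‖a'‖ = 1 := mem_sphere_zero_iff_norm.1 (hAs ha')
  obtain ⟨θ, q, hθ0, hθπ, hq1, hqo, hv, hseg⟩ := hconv a ha a' ha'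
  have hsθ : 0 ≤ Real.sin θ := Real.sin_nonneg_of_nonneg_of_le_pi hθ0 hθπ
  have hθπ' : θ ≠ Real.pi := by
    intro hpi
    rw [hpi, Real.cos_pi, Real.sin_pi] at hv
    have : a' = -a := by rw [hv]; module
    exact hant a ha (this ▸ ha')
  rcases eq_or_lt_of_le hθ0 with hθz | hθpos
  · have haa : a' = a := by rw [hv, ← hθz]; simp
    have hab : α + β ≠ 0 := by
      intro h0
      have hα0 : α = 0 := le_antisymm (by linarith) hα
      have hβ0 : β = 0 := by linarith
      exact hw (by rw [hα0, hβ0]; simp)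
    have habpos : 0 < α + β := lt_of_le_of_ne (by linarith) (Ne.symm hab)
    have hwa : α • a + β • a' = (α + β) • a := by rw [haa]; module
    rw [hwa, norm_smul, hna, mul_one, Real.norm_eq_abs, abs_of_pos habpos,
      smul_smul, inv_mul_cancel₀ hab, one_smul]
    exact ha
  · set m : ℝ := α + β * Real.cos θ with hm
    set s : ℝ := β * Real.sin θ with hs
    have hs0 : 0 ≤ s := mul_nonneg hβ hsθ
    have hw2 : α • a + β • a' = m • a + s • q := by rw [hv, hm, hs]; module
    set r : ℝ := ‖α • a + β • a'‖ with hr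
    have hrpos : 0 < r := norm_pos_iff.2 hw
    have hr2 : r ^ 2 = m ^ 2 + s ^ 2 := by
      rw [hr, hw2]; exact norm_combo_sq hna hq1 hqo m s
    have hm2 : m ^ 2 ≤ r ^ 2 := by nlinarith [sq_nonneg s]
    have hmr : |m| ≤ r := by
      rw [abs_le]; constructor <;> nlinarith
    have hmr1 : -1 ≤ m / r := by
      rw [le_div_iff₀ hrpos]; nlinarith [abs_le.1 hmr]
    have hmr2 : m / r ≤ 1 := by
      rw [div_le_one hrpos]; nlinarith [abs_le.1 hmr]
    set φ : ℝ := Real.arccos (m / r) with hφ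
    have hcosφ : Real.cos φ = m / r := Real.cos_arccos hmr1 hmr2
    have hsinφ : Real.sin φ = s / r := by
      rw [hφ, Real.sin_arccos]
      have h1 : 1 - (m / r) ^ 2 = (s / r) ^ 2 := by
        rw [div_pow, div_pow, eq_div_iff (pow_ne_zero 2 hrpos.ne'), sub_mul, one_mul,
          div_mul_cancel₀ _ (pow_ne_zero 2 hrpos.ne')]
        linarith [hr2]
      rw [h1, Real.sqrt_sq (div_nonneg hs0 hrpos.le)]
    have hrβ : |r - β| ≤ α := by
      have h1 : α • a + β • a' - β • a' = α • a := by module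
      have h2 := abs_norm_sub_norm_le (α • a + β • a') (β • a')
      rw [h1, norm_smul, norm_smul, hna, hna', mul_one, mul_one,
        Real.norm_eq_abs, Real.norm_eq_abs, abs_of_nonneg hα, abs_of_nonneg hβ] at h2
      exact h2
    have hcc : Real.cos θ ≤ m / r := by
      rw [le_div_iff₀ hrpos]
      have h1 := abs_le.1 hrβ
      have key : (r - β) * Real.cos θ ≤ α := by
        rcases le_or_gt β r with hc | hc
        · have := mul_le_mul_of_nonneg_left (Real.cos_le_one θ) (sub_nonneg.2 hc)
          linarith
        · have := mul_le_mul_of_nonpos_left (Real.neg_one_le_cos θ) (by linarith : r - β ≤ 0)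
          linarith
      rw [hm]
      nlinarith [key]
    have hφθ : φ ≤ θ := by
      calc φ = Real.arccos (m / r) := hφ
        _ ≤ Real.arccos (Real.cos θ) := arccos_le_arccos' hcc
        _ = θ := Real.arccos_cos hθ0 hθπ
    have hφ0 : 0 ≤ φ := Real.arccos_nonneg _
    have ht : φ / θ ∈ Set.Icc (0:ℝ) 1 :=
      ⟨div_nonneg hφ0 hθpos.le, (div_le_one hθpos).2 hφθ⟩
    have hmem := hseg (φ / θ) ht
    rw [div_mul_cancel₀ _ hθpos.ne'] at hmem
    have hfinal : ‖α • a + β • a'‖⁻¹ • (α • a + β • a') = Real.cos φ • a + Real.sin φ • q := by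
      rw [hcosφ, hsinφ, ← hr, hw2, smul_add, smul_smul, smul_smul,
        div_eq_inv_mul, div_eq_inv_mul]
    rw [hfinal]
    exact hmem

lemma join_norm_one {A B : Set E4} {u : E4} (hu : u ∈ sJoin A B) : ‖u‖ = 1 := by
  obtain ⟨a, _, b, _, c₁, c₂, _, _, hne, rfl⟩ := hu
  rw [norm_smul, norm_inv, norm_norm, inv_mul_cancel₀ (norm_ne_zero_iff.2 hne)]

lemma normalize_package {A : Set E4} (hAs : A ⊆ sphere 0 1) (hconv : SConvex A)
    (hant : ∀ p ∈ A, -p ∉ A) {a a' : E4} (ha : a ∈ A) (ha' : a' ∈ A)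
    {α β : ℝ} (hα : 0 ≤ α) (hβ : 0 ≤ β) :
    ∃ p ∈ A, ‖α • a + β • a'‖ • p = α • a + β • a' := by
  by_cases hx : α • a + β • a' = 0
  · exact ⟨a, ha, by rw [hx]; simp⟩
  · exact ⟨‖α • a + β • a'‖⁻¹ • (α • a + β • a'),
      sconvex_normalize_mem hAs hconv hant ha ha' hα hβ hx,
      by rw [smul_smul, mul_inv_cancel₀ (norm_ne_zero_iff.2 hx), one_smul]⟩

set_option maxHeartbeats 1600000 in
lemma combo_mem_join {A B : Set E4}
    (hAs : A ⊆ sphere 0 1) (hBs : B ⊆ sphere 0 1)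
    (hAconv : SConvex A) (hBconv : SConvex B)
    (hant : ∀ u ∈ A ∪ B, -u ∉ A ∪ B)
    {u v : E4} (hu : u ∈ sJoin A B) (hv : v ∈ sJoin A B) {s₁ s₂ : ℝ}
    (hs₁ : 0 ≤ s₁) (hs₂ : 0 ≤ s₂) (hs : ¬(s₁ = 0 ∧ s₂ = 0)) :
    s₁ • u + s₂ • v ≠ 0 ∧ ‖s₁ • u + s₂ • v‖⁻¹ • (s₁ • u + s₂ • v) ∈ sJoin A B := by
  have hantA : ∀ p ∈ A, -p ∉ A := fun p hp h => hant p (Or.inl hp) (Or.inl h)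
  have hantB : ∀ p ∈ B, -p ∉ B := fun p hp h => hant p (Or.inr hp) (Or.inr h)
  obtain ⟨a, haA, b, hbB, c₁, c₂, hc₁, hc₂, hw₁, hueq⟩ := hu
  obtain ⟨a', haA', b', hbB', d₁, d₂, hd₁, hd₂, hw₂, hveq⟩ := hv
  have hg₁pos : (0:ℝ) < ‖c₁ • a + c₂ • b‖⁻¹ := inv_pos.2 (norm_pos_iff.2 hw₁)
  have hg₂pos : (0:ℝ) < ‖d₁ • a' + d₂ • b'‖⁻¹ := inv_pos.2 (norm_pos_iff.2 hw₂)
  set g₁ : ℝ := ‖c₁ • a + c₂ • b‖⁻¹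
  set g₂ : ℝ := ‖d₁ • a' + d₂ • b'‖⁻¹
  have he₁ : 0 ≤ s₁ * g₁ * c₁ := mul_nonneg (mul_nonneg hs₁ hg₁pos.le) hc₁
  have he₂ : 0 ≤ s₁ * g₁ * c₂ := mul_nonneg (mul_nonneg hs₁ hg₁pos.le) hc₂
  have hf₁ : 0 ≤ s₂ * g₂ * d₁ := mul_nonneg (mul_nonneg hs₂ hg₂pos.le) hd₁
  have hf₂ : 0 ≤ s₂ * g₂ * d₂ := mul_nonneg (mul_nonneg hs₂ hg₂pos.le) hd₂
  have hsum : s₁ • u + s₂ • v =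
      ((s₁ * g₁ * c₁) • a + (s₂ * g₂ * d₁) • a') +
      ((s₁ * g₁ * c₂) • b + (s₂ * g₂ * d₂) • b') := by
    rw [hueq, hveq]; module
  have hWne : s₁ • u + s₂ • v ≠ 0 := by
    rw [hsum]
    intro h0
    by_cases hx0 : (s₁ * g₁ * c₁) • a + (s₂ * g₂ * d₁) • a' = 0
    · have hy0 : (s₁ * g₁ * c₂) • b + (s₂ * g₂ * d₂) • b' = 0 := by
        rw [hx0, zero_add] at h0; exact h0
      obtain ⟨h1, h2⟩ := combo_eq_zero hAs hantA haA haA' he₁ hf₁ hx0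
      obtain ⟨h3, h4⟩ := combo_eq_zero hBs hantB hbB hbB' he₂ hf₂ hy0
      refine hs ⟨?_, ?_⟩
      · by_contra hne
        have hgg : s₁ * g₁ ≠ 0 := mul_ne_zero hne hg₁pos.ne'
        have hcc₁ : c₁ = 0 := by
          rcases mul_eq_zero.1 h1 with h | h
          · exact absurd h hgg
          · exact h
        have hcc₂ : c₂ = 0 := by
          rcases mul_eq_zero.1 h3 with h | h
          · exact absurd h hgg
          · exact h
        exact hw₁ (by rw [hcc₁, hcc₂]; simp)
      · by_contra hne
        have hgg : s₂ * g₂ ≠ 0 := mul_ne_zero hne hg₂pos.ne'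
        have hdd₁ : d₁ = 0 := by
          rcases mul_eq_zero.1 h2 with h | h
          · exact absurd h hgg
          · exact h
        have hdd₂ : d₂ = 0 := by
          rcases mul_eq_zero.1 h4 with h | h
          · exact absurd h hgg
          · exact h
        exact hw₂ (by rw [hdd₁, hdd₂]; simp)
    · -- x ≠ 0, and y = -x
      have hy0 : (s₁ * g₁ * c₂) • b + (s₂ * g₂ * d₂) • b' =
          -((s₁ * g₁ * c₁) • a + (s₂ * g₂ * d₁) • a') :=
        eq_neg_of_add_eq_zero_right h0
      have hyne : (s₁ * g₁ * c₂) • b + (s₂ * g₂ * d₂) • b' ≠ 0 := by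
        rw [hy0]; exact neg_ne_zero.2 hx0
      have hpA := sconvex_normalize_mem hAs hAconv hantA haA haA' he₁ hf₁ hx0
      have hpB := sconvex_normalize_mem hBs hBconv hantB hbB hbB' he₂ hf₂ hyne
      rw [hy0, norm_neg, smul_neg] at hpB
      exact hant _ (Or.inl hpA) (Or.inr hpB)
  refine ⟨hWne, ?_⟩
  obtain ⟨pA, hpA, hpAx⟩ := normalize_package hAs hAconv hantA haA haA' he₁ hf₁
  obtain ⟨pB, hpB, hpBy⟩ := normalize_package hBs hBconv hantB hbB hbB' he₂ hf₂
  refine ⟨pA, hpA, pB, hpB,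
    ‖(s₁ * g₁ * c₁) • a + (s₂ * g₂ * d₁) • a'‖,
    ‖(s₁ * g₁ * c₂) • b + (s₂ * g₂ * d₂) • b'‖,
    norm_nonneg _, norm_nonneg _, ?_, ?_⟩
  · rw [hpAx, hpBy, ← hsum]; exact hWne
  · rw [hpAx, hpBy, ← hsum]

/-- If A, B ⊆ S³ are compact convex sets such that A ∪ B contains
no pair of antipodal points, then Join(A,B) is convex. -/
theorem stmt5 (A B : Set (EuclideanSpace ℝ (Fin 4)))
    (hAs : A ⊆ sphere 0 1) (hBs : B ⊆ sphere 0 1)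
    (hAc : IsCompact A) (hBc : IsCompact B)
    (hAconv : SConvex A) (hBconv : SConvex B)
    (hant : ∀ u ∈ A ∪ B, -u ∉ A ∪ B) :
    SConvex (sJoin A B) := by
  intro u hu v hv
  have hu1 : ‖u‖ = 1 := join_norm_one hu
  have hv1 : ‖v‖ = 1 := join_norm_one hv
  by_cases huv : u = v
  · obtain ⟨q, hq1, hqo⟩ := exists_unit_orthogonal u
    refine ⟨0, q, le_refl 0, Real.pi_pos.le, hq1, hqo, ?_, ?_⟩
    · rw [← huv]; simp
    · intro t ht; simpa using hu
  · have hcombo11 := combo_mem_join hAs hBs hAconv hBconv hant hu hv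
      (zero_le_one) (zero_le_one) (by norm_num)
    set c : ℝ := inner ℝ u v with hc
    have hc1 : c < 1 := by
      have h := norm_sub_sq_real u v
      have hpos : 0 < ‖u - v‖ := norm_pos_iff.2 (sub_ne_zero.2 huv)
      rw [hu1, hv1, ← hc] at h
      nlinarith
    have hcm1 : -1 < c := by
      have h := norm_add_sq_real u v
      have hne : u + v ≠ 0 := by
        have := hcombo11.1
        simpa using this
      have hpos : 0 < ‖u + v‖ := norm_pos_iff.2 hne
      rw [hu1, hv1, ← hc] at h
      nlinarith
    set θ : ℝ := Real.arccos c with hθ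
    have hcos : Real.cos θ = c := Real.cos_arccos hcm1.le hc1.le
    have hθ0 : 0 < θ := Real.arccos_pos.2 hc1
    have hθπ : θ ≤ Real.pi := Real.arccos_le_pi c
    have hθltπ : θ < Real.pi := by
      rcases lt_or_eq_of_le hθπ with h | h
      · exact h
      · exact absurd (Real.arccos_eq_pi.1 h) (not_le.2 hcm1)
    have hsinpos : 0 < Real.sin θ := Real.sin_pos_of_pos_of_lt_pi hθ0 hθltπ
    set q : E4 := (Real.sin θ)⁻¹ • (v - c • u) with hq
    have hsinsq : Real.sin θ ^ 2 = 1 - c ^ 2 := by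
      have := Real.sin_sq_add_cos_sq θ
      rw [hcos] at this; linarith
    have hnormvc : ‖v - c • u‖ = Real.sin θ := by
      have h2 : ‖v - c • u‖ ^ 2 = Real.sin θ ^ 2 := by
        rw [norm_sub_sq_real, real_inner_smul_right, norm_smul, hu1, hv1,
          Real.norm_eq_abs, real_inner_comm u v, ← hc, hsinsq, mul_one, sq_abs]
        ring
      have := congrArg Real.sqrt h2
      rwa [Real.sqrt_sq (norm_nonneg _), Real.sqrt_sq hsinpos.le] at this
    have hq1 : ‖q‖ = 1 := by
      rw [hq, norm_smul, norm_inv, Real.norm_eq_abs, abs_of_pos hsinpos, hnormvc,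
        inv_mul_cancel₀ hsinpos.ne']
    have hqo : (inner ℝ u q : ℝ) = 0 := by
      rw [hq, real_inner_smul_right, inner_sub_right, real_inner_smul_right,
        real_inner_self_eq_norm_sq, hu1, ← hc]
      ring
    have hveq : v = Real.cos θ • u + Real.sin θ • q := by
      rw [hcos, hq, smul_smul, mul_inv_cancel₀ hsinpos.ne', one_smul]
      module
    refine ⟨θ, q, hθ0.le, hθπ, hq1, hqo, hveq, ?_⟩
    intro t ht
    obtain ⟨ht0, ht1⟩ := ht
    have htθ0 : 0 ≤ t * θ := mul_nonneg ht0 hθ0.le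
    have htθ : t * θ ≤ θ := mul_le_of_le_one_left hθ0.le ht1
    have h1tθ0 : 0 ≤ (1 - t) * θ := mul_nonneg (by linarith) hθ0.le
    have h1tθ : (1 - t) * θ ≤ θ := mul_le_of_le_one_left hθ0.le (by linarith)
    have hs₁n : 0 ≤ Real.sin ((1 - t) * θ) :=
      Real.sin_nonneg_of_nonneg_of_le_pi h1tθ0 (le_trans h1tθ hθπ)
    have hs₂n : 0 ≤ Real.sin (t * θ) :=
      Real.sin_nonneg_of_nonneg_of_le_pi htθ0 (le_trans htθ hθπ)
    have hns : ¬(Real.sin ((1 - t) * θ) = 0 ∧ Real.sin (t * θ) = 0) := by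
      rintro ⟨h1, h2⟩
      have htz : t * θ = 0 :=
        (Real.sin_eq_zero_iff_of_lt_of_lt (by linarith [Real.pi_pos])
          (lt_of_le_of_lt htθ hθltπ)).1 h2
      have : (1 - t) * θ = θ := by nlinarith
      rw [this] at h1
      exact hsinpos.ne' h1
    obtain ⟨hWne, hWmem⟩ := combo_mem_join hAs hBs hAconv hBconv hant hu hv hs₁n hs₂n hns
    have hPW : Real.sin θ • (Real.cos (t * θ) • u + Real.sin (t * θ) • q) =
        Real.sin ((1 - t) * θ) • u + Real.sin (t * θ) • v := by
      have hseq : Real.sin ((1 - t) * θ) =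
          Real.sin θ * Real.cos (t * θ) - c * Real.sin (t * θ) := by
        have he : (1 - t) * θ = θ - t * θ := by ring
        rw [he, Real.sin_sub, hcos]
      rw [hseq, hq]
      match_scalars
      · field_simp
        ring
      · field_simp
    have hPnorm : ‖Real.cos (t * θ) • u + Real.sin (t * θ) • q‖ = 1 := by
      have h2 : ‖Real.cos (t * θ) • u + Real.sin (t * θ) • q‖ ^ 2 = 1 := by
        rw [norm_combo_sq hu1 hq1 hqo]
        rw [add_comm]
        exact Real.sin_sq_add_cos_sq _
      have := congrArg Real.sqrt h2
      rwa [Real.sqrt_sq (norm_nonneg _), Real.sqrt_one] at this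
    have hWnorm : ‖Real.sin ((1 - t) * θ) • u + Real.sin (t * θ) • v‖ = Real.sin θ := by
      rw [← hPW, norm_smul, Real.norm_eq_abs, abs_of_pos hsinpos, hPnorm, mul_one]
    have hPfinal : Real.cos (t * θ) • u + Real.sin (t * θ) • q =
        ‖Real.sin ((1 - t) * θ) • u + Real.sin (t * θ) • v‖⁻¹ •
          (Real.sin ((1 - t) * θ) • u + Real.sin (t * θ) • v) := by
      rw [hWnorm, ← hPW, inv_smul_smul₀ hsinpos.ne']
    rw [hPfinal]
    exact hWmem

end
end

section
/- Let {A_n} and {B_n} be sequences of compact properly convex subsets of S^3 converging in the Hausdorff metric to compact properly convex sets A and B respectively, with A ∩ (−B) = ∅. Then there is I_0 such that Join(A_n, B_n) is defined for n > I_0, and the sequence {Join(A_n, B_n)} converges in the Hausdorff metric to Join(A, B). -/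
open Metric Filter

noncomputable section

/-- A compact properly convex subset of S³: nonempty, compact, convex, with
no pair of antipodal points. -/
def ProperlyConvex (C : Set (EuclideanSpace ℝ (Fin 4))) : Prop :=
  C.Nonempty ∧ C ⊆ sphere 0 1 ∧ IsCompact C ∧ SConvex C ∧ ∀ u ∈ C, -u ∉ C

lemma aux_norm_convex {E : Type*} [NormedAddCommGroup E] [InnerProductSpace ℝ E]
    {a b : E} {r t : ℝ} (ha : ‖a‖ = 1) (hb : ‖b‖ = 1) (hr : 0 ≤ r) (hr2 : r ≤ 2)
    (hab : r ≤ ‖a + b‖) (ht0 : 0 ≤ t) (ht1 : t ≤ 1) :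
    r / 2 ≤ ‖(1 - t) • a + t • b‖ := by
  have hp : (-1 : ℝ) ≤ inner ℝ a b := by
    have := abs_real_inner_le_norm a b
    rw [ha, hb] at this
    have := abs_le.mp this
    linarith [this.1]
  have h1 : ‖a + b‖ ^ 2 = 2 + 2 * (inner ℝ a b : ℝ) := by
    rw [@norm_add_sq_real, ha, hb]; ring
  have h3 : r ^ 2 ≤ 2 + 2 * (inner ℝ a b : ℝ) := by
    rw [← h1]
    nlinarith [norm_nonneg (a + b)]
  have h2 : ‖(1 - t) • a + t • b‖ ^ 2
      = (1 - t) ^ 2 + 2 * (t * (1 - t)) * (inner ℝ a b : ℝ) + t ^ 2 := by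
    rw [@norm_add_sq_real, norm_smul, norm_smul, real_inner_smul_left,
      real_inner_smul_right, ha, hb, Real.norm_eq_abs, Real.norm_eq_abs,
      abs_of_nonneg ht0, abs_of_nonneg (by linarith : (0:ℝ) ≤ 1 - t)]
    ring
  have h4 : (r / 2) ^ 2 ≤ ‖(1 - t) • a + t • b‖ ^ 2 := by
    rw [h2]
    nlinarith [sq_nonneg (1 - 2 * t),
      mul_nonneg (mul_nonneg ht0 (by linarith : (0:ℝ) ≤ 1 - t))
        (by linarith : (0:ℝ) ≤ 2 + 2 * (inner ℝ a b : ℝ) - r ^ 2),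
      mul_nonneg (sq_nonneg (1 - 2 * t)) (by nlinarith : (0:ℝ) ≤ 4 - r ^ 2)]
  nlinarith [norm_nonneg ((1 - t) • a + t • b)]

lemma aux_normalize_lip {E : Type*} [NormedAddCommGroup E] [InnerProductSpace ℝ E]
    {x y : E} {c : ℝ} (hc : 0 < c) (hx : c ≤ ‖x‖) (hy : y ≠ 0) :
    ‖‖x‖⁻¹ • x - ‖y‖⁻¹ • y‖ ≤ 2 * ‖x - y‖ / c := by
  have hx0 : 0 < ‖x‖ := lt_of_lt_of_le hc hx
  have hy0 : 0 < ‖y‖ := norm_pos_iff.mpr hy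
  have key : ‖x‖⁻¹ • x - ‖y‖⁻¹ • y = ‖x‖⁻¹ • (x - y) + (‖x‖⁻¹ - ‖y‖⁻¹) • y := by
    module
  rw [key]
  have h1 : ‖‖x‖⁻¹ • (x - y)‖ = ‖x - y‖ / ‖x‖ := by
    rw [norm_smul, Real.norm_eq_abs, abs_of_nonneg (by positivity)]
    ring
  have h2 : ‖(‖x‖⁻¹ - ‖y‖⁻¹) • y‖ ≤ ‖x - y‖ / ‖x‖ := by
    rw [norm_smul, Real.norm_eq_abs]
    have hd : ‖x‖⁻¹ - ‖y‖⁻¹ = (‖y‖ - ‖x‖) / (‖x‖ * ‖y‖) := by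
      field_simp
    rw [hd, abs_div, abs_mul, abs_of_pos hx0, abs_of_pos hy0]
    have habs : |‖y‖ - ‖x‖| ≤ ‖x - y‖ := by
      rw [abs_sub_comm]; exact abs_norm_sub_norm_le x y
    calc |‖y‖ - ‖x‖| / (‖x‖ * ‖y‖) * ‖y‖ = |‖y‖ - ‖x‖| / ‖x‖ := by
          field_simp
      _ ≤ ‖x - y‖ / ‖x‖ := by gcongr
  calc ‖‖x‖⁻¹ • (x - y) + (‖x‖⁻¹ - ‖y‖⁻¹) • y‖
      ≤ ‖‖x‖⁻¹ • (x - y)‖ + ‖(‖x‖⁻¹ - ‖y‖⁻¹) • y‖ := norm_add_le _ _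
    _ ≤ ‖x - y‖ / ‖x‖ + ‖x - y‖ / ‖x‖ := by rw [h1]; exact add_le_add le_rfl h2
    _ = 2 * ‖x - y‖ / ‖x‖ := by ring
    _ ≤ 2 * ‖x - y‖ / c := by gcongr

lemma aux_normalize_smul {E : Type*} [NormedAddCommGroup E] [Module ℝ E]
    [NormSMulClass ℝ E] {s : ℝ} (hs : 0 < s) (v : E) :
    ‖s • v‖⁻¹ • (s • v) = ‖v‖⁻¹ • v := by
  rw [norm_smul, Real.norm_eq_abs, abs_of_pos hs, smul_smul]
  by_cases hv : v = 0
  · simp [hv]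
  · have : ((s * ‖v‖)⁻¹ * s) = ‖v‖⁻¹ := by
      field_simp
    rw [this]

lemma sJoin_elim {A B : Set (EuclideanSpace ℝ (Fin 4))} {u : EuclideanSpace ℝ (Fin 4)}
    (h : u ∈ sJoin A B) :
    ∃ a ∈ A, ∃ b ∈ B, ∃ t : ℝ, 0 ≤ t ∧ t ≤ 1 ∧ ((1 - t) • a + t • b ≠ 0) ∧
      u = ‖(1 - t) • a + t • b‖⁻¹ • ((1 - t) • a + t • b) := by
  obtain ⟨a, ha, b, hb, c₁, c₂, h1, h2, hne, hu⟩ := h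
  have hs : 0 < c₁ + c₂ := by
    rcases (add_nonneg h1 h2).lt_or_eq with h | h
    · exact h
    · exfalso
      apply hne
      have hc1 : c₁ = 0 := by linarith
      have hc2 : c₂ = 0 := by linarith
      simp [hc1, hc2]
  refine ⟨a, ha, b, hb, c₂ / (c₁ + c₂), by positivity,
    by rw [div_le_one hs]; linarith, ?_, ?_⟩
  all_goals
    have hx : c₁ • a + c₂ • b
        = (c₁ + c₂) • ((1 - c₂ / (c₁ + c₂)) • a + (c₂ / (c₁ + c₂)) • b) := by
      have h1t : 1 - c₂ / (c₁ + c₂) = c₁ / (c₁ + c₂) := by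
        field_simp; ring
      rw [h1t]
      match_scalars <;> field_simp
  · intro h0
    apply hne
    rw [hx, h0, smul_zero]
  · rw [hu, hx, aux_normalize_smul hs]


/-- If Aₙ → A and Bₙ → B in the Hausdorff metric, with all sets
compact properly convex and A ∩ (−B) = ∅, then for large n the join of Aₙ and
Bₙ is defined and Join(Aₙ,Bₙ) → Join(A,B) in the Hausdorff metric. -/
theorem stmt6 (A B : ℕ → Set (EuclideanSpace ℝ (Fin 4)))
    (Ainf Binf : Set (EuclideanSpace ℝ (Fin 4)))
    (hA : ∀ n, ProperlyConvex (A n)) (hB : ∀ n, ProperlyConvex (B n))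
    (hAi : ProperlyConvex Ainf) (hBi : ProperlyConvex Binf)
    (hAconv : Tendsto (fun n => hausdorffDist (A n) Ainf) atTop (nhds 0))
    (hBconv : Tendsto (fun n => hausdorffDist (B n) Binf) atTop (nhds 0))
    (hdisj : ∀ b ∈ Binf, -b ∉ Ainf) :
    ∃ I₀ : ℕ, (∀ n, I₀ < n → ∀ b ∈ B n, -b ∉ A n) ∧
      Tendsto (fun n => hausdorffDist (sJoin (A n) (B n)) (sJoin Ainf Binf))
        atTop (nhds 0) := by
  -- unit norm facts
  have sphAn : ∀ n, ∀ a ∈ A n, ‖a‖ = 1 := fun n a ha =>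
    mem_sphere_zero_iff_norm.mp ((hA n).2.1 ha)
  have sphBn : ∀ n, ∀ b ∈ B n, ‖b‖ = 1 := fun n b hb =>
    mem_sphere_zero_iff_norm.mp ((hB n).2.1 hb)
  have sphAi : ∀ a ∈ Ainf, ‖a‖ = 1 := fun a ha =>
    mem_sphere_zero_iff_norm.mp (hAi.2.1 ha)
  have sphBi : ∀ b ∈ Binf, ‖b‖ = 1 := fun b hb =>
    mem_sphere_zero_iff_norm.mp (hBi.2.1 hb)
  -- the minimum separation m
  obtain ⟨q, hq, hqmin'⟩ := (hAi.2.2.1.prod hBi.2.2.1).exists_isMinOn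
    (hAi.1.prod hBi.1) ((continuous_fst.add continuous_snd).norm.continuousOn)
  have hqmin : ∀ p ∈ Ainf ×ˢ Binf, ‖q.1 + q.2‖ ≤ ‖p.1 + p.2‖ := fun p hp => hqmin' hp
  set m : ℝ := ‖q.1 + q.2‖ with hm_def
  have hmin : ∀ a ∈ Ainf, ∀ b ∈ Binf, m ≤ ‖a + b‖ := fun a ha b hb =>
    hqmin (a, b) (Set.mk_mem_prod ha hb)
  have hm0 : 0 < m := by
    rw [hm_def, norm_pos_iff]
    intro h
    have hq1 : q.1 = -q.2 := by
      have := eq_neg_of_add_eq_zero_left h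
      exact this
    exact hdisj q.2 hq.2 (hq1 ▸ hq.1)
  have hm2 : m ≤ 2 := by
    have h1 := sphAi q.1 hq.1
    have h2 := sphBi q.2 hq.2
    calc m ≤ ‖q.1‖ + ‖q.2‖ := norm_add_le _ _
      _ = 2 := by rw [h1, h2]; norm_num
  -- finiteness of Hausdorff edistances
  have bddA : ∀ n, Bornology.IsBounded (A n) := fun n =>
    isBounded_sphere.subset (hA n).2.1
  have bddB : ∀ n, Bornology.IsBounded (B n) := fun n =>
    isBounded_sphere.subset (hB n).2.1
  have bddAi : Bornology.IsBounded Ainf :=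
    isBounded_sphere.subset hAi.2.1
  have bddBi : Bornology.IsBounded Binf :=
    isBounded_sphere.subset hBi.2.1
  have hfinA : ∀ n, EMetric.hausdorffEdist (A n) Ainf ≠ ⊤ := fun n =>
    hausdorffEdist_ne_top_of_nonempty_of_bounded (hA n).1 hAi.1 (bddA n) bddAi
  have hfinB : ∀ n, EMetric.hausdorffEdist (B n) Binf ≠ ⊤ := fun n =>
    hausdorffEdist_ne_top_of_nonempty_of_bounded (hB n).1 hBi.1 (bddB n) bddBi
  -- quantitative convergence statements
  rw [Metric.tendsto_atTop] at hAconv hBconv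
  have hgetA : ∀ ε > (0:ℝ), ∃ N, ∀ n ≥ N, hausdorffDist (A n) Ainf < ε := by
    intro ε hε
    obtain ⟨N, hN⟩ := hAconv ε hε
    exact ⟨N, fun n hn => by
      have := hN n hn
      rwa [Real.dist_eq, sub_zero, abs_of_nonneg hausdorffDist_nonneg] at this⟩
  have hgetB : ∀ ε > (0:ℝ), ∃ N, ∀ n ≥ N, hausdorffDist (B n) Binf < ε := by
    intro ε hε
    obtain ⟨N, hN⟩ := hBconv ε hε
    exact ⟨N, fun n hn => by
      have := hN n hn
      rwa [Real.dist_eq, sub_zero, abs_of_nonneg hausdorffDist_nonneg] at this⟩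
  -- separation for nearby sets
  have hsep : ∀ n, hausdorffDist (A n) Ainf < m / 4 → hausdorffDist (B n) Binf < m / 4 →
      ∀ b ∈ B n, -b ∉ A n := by
    intro n hdA hdB b hb hmem
    obtain ⟨a₀, ha₀, hda⟩ := exists_dist_lt_of_hausdorffDist_lt hmem hdA (hfinA n)
    obtain ⟨b₀, hb₀, hdb⟩ := exists_dist_lt_of_hausdorffDist_lt hb hdB (hfinB n)
    have hmm := hmin a₀ ha₀ b₀ hb₀
    have hsum : ‖a₀ + b₀‖ ≤ dist (-b) a₀ + dist b b₀ := by
      have hdec : a₀ + b₀ = -((-b) - a₀) + (b₀ - b) := by module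
      rw [hdec]
      calc ‖-((-b) - a₀) + (b₀ - b)‖ ≤ ‖-((-b) - a₀)‖ + ‖b₀ - b‖ := norm_add_le _ _
        _ = dist (-b) a₀ + dist b b₀ := by
            rw [norm_neg, ← dist_eq_norm, ← dist_eq_norm, dist_comm b₀ b]
    linarith
  -- the key Hausdorff distance estimate for joins
  have hkey : ∀ n (r' : ℝ), 0 < r' → r' ≤ m / 4 →
      hausdorffDist (A n) Ainf < r' → hausdorffDist (B n) Binf < r' →
      hausdorffDist (sJoin (A n) (B n)) (sJoin Ainf Binf) ≤ 4 * r' / m := by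
    intro n r' hr'0 hr'm hdA hdB
    apply hausdorffDist_le_of_mem_dist (by positivity)
    · intro u hu
      obtain ⟨a, ha, b, hb, t, ht0, ht1, hxne, hux⟩ := sJoin_elim hu
      obtain ⟨a₀, ha₀, hda⟩ := exists_dist_lt_of_hausdorffDist_lt ha hdA (hfinA n)
      obtain ⟨b₀, hb₀, hdb⟩ := exists_dist_lt_of_hausdorffDist_lt hb hdB (hfinB n)
      set x : EuclideanSpace ℝ (Fin 4) := (1 - t) • a + t • b with hx_def
      set x₀ : EuclideanSpace ℝ (Fin 4) := (1 - t) • a₀ + t • b₀ with hx₀_def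
      have hx₀norm : m / 2 ≤ ‖x₀‖ :=
        aux_norm_convex (sphAi a₀ ha₀) (sphBi b₀ hb₀) hm0.le hm2
          (hmin a₀ ha₀ b₀ hb₀) ht0 ht1
      have hx₀ne : x₀ ≠ 0 := by
        intro h
        rw [h, norm_zero] at hx₀norm
        linarith
      refine ⟨‖x₀‖⁻¹ • x₀, ⟨a₀, ha₀, b₀, hb₀, 1 - t, t, by linarith, ht0, hx₀ne, rfl⟩, ?_⟩
      have hdiff : ‖x₀ - x‖ ≤ r' := by
        have hdec : x₀ - x = (1 - t) • (a₀ - a) + t • (b₀ - b) := by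
          rw [hx_def, hx₀_def]; module
        have hna : ‖a₀ - a‖ ≤ r' := by
          rw [← dist_eq_norm, dist_comm]; exact hda.le
        have hnb : ‖b₀ - b‖ ≤ r' := by
          rw [← dist_eq_norm, dist_comm]; exact hdb.le
        calc ‖x₀ - x‖ = ‖(1 - t) • (a₀ - a) + t • (b₀ - b)‖ := by rw [hdec]
          _ ≤ ‖(1 - t) • (a₀ - a)‖ + ‖t • (b₀ - b)‖ := norm_add_le _ _
          _ = (1 - t) * ‖a₀ - a‖ + t * ‖b₀ - b‖ := by
              rw [norm_smul, norm_smul, Real.norm_eq_abs, Real.norm_eq_abs,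
                abs_of_nonneg (by linarith : (0:ℝ) ≤ 1 - t), abs_of_nonneg ht0]
          _ ≤ (1 - t) * r' + t * r' := by
              gcongr <;> linarith
          _ = r' := by ring
      have hlip : ‖‖x₀‖⁻¹ • x₀ - ‖x‖⁻¹ • x‖ ≤ 2 * ‖x₀ - x‖ / (m / 2) :=
        aux_normalize_lip (by positivity) hx₀norm hxne
      rw [hux, dist_comm, dist_eq_norm]
      calc ‖‖x₀‖⁻¹ • x₀ - ‖x‖⁻¹ • x‖ ≤ 2 * ‖x₀ - x‖ / (m / 2) := hlip
        _ ≤ 2 * r' / (m / 2) := by gcongr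
        _ = 4 * r' / m := by field_simp; ring
    · intro u₀ hu₀
      obtain ⟨a₀, ha₀, b₀, hb₀, t, ht0, ht1, hx₀ne', hux₀⟩ := sJoin_elim hu₀
      obtain ⟨a, ha, hda⟩ := exists_dist_lt_of_hausdorffDist_lt' ha₀ hdA (hfinA n)
      obtain ⟨b, hb, hdb⟩ := exists_dist_lt_of_hausdorffDist_lt' hb₀ hdB (hfinB n)
      set x : EuclideanSpace ℝ (Fin 4) := (1 - t) • a + t • b with hx_def
      set x₀ : EuclideanSpace ℝ (Fin 4) := (1 - t) • a₀ + t • b₀ with hx₀_def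
      have hx₀norm : m / 2 ≤ ‖x₀‖ :=
        aux_norm_convex (sphAi a₀ ha₀) (sphBi b₀ hb₀) hm0.le hm2
          (hmin a₀ ha₀ b₀ hb₀) ht0 ht1
      have hdiff : ‖x₀ - x‖ ≤ r' := by
        have hdec : x₀ - x = (1 - t) • (a₀ - a) + t • (b₀ - b) := by
          rw [hx_def, hx₀_def]; module
        have hna : ‖a₀ - a‖ ≤ r' := by
          rw [← dist_eq_norm, dist_comm]; exact hda.le
        have hnb : ‖b₀ - b‖ ≤ r' := by
          rw [← dist_eq_norm, dist_comm]; exact hdb.le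
        calc ‖x₀ - x‖ = ‖(1 - t) • (a₀ - a) + t • (b₀ - b)‖ := by rw [hdec]
          _ ≤ ‖(1 - t) • (a₀ - a)‖ + ‖t • (b₀ - b)‖ := norm_add_le _ _
          _ = (1 - t) * ‖a₀ - a‖ + t * ‖b₀ - b‖ := by
              rw [norm_smul, norm_smul, Real.norm_eq_abs, Real.norm_eq_abs,
                abs_of_nonneg (by linarith : (0:ℝ) ≤ 1 - t), abs_of_nonneg ht0]
          _ ≤ (1 - t) * r' + t * r' := by
              gcongr <;> linarith
          _ = r' := by ring
      have hxne : x ≠ 0 := by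
        intro h
        rw [h, sub_zero] at hdiff
        linarith
      refine ⟨‖x‖⁻¹ • x, ⟨a, ha, b, hb, 1 - t, t, by linarith, ht0, hxne, rfl⟩, ?_⟩
      have hlip : ‖‖x₀‖⁻¹ • x₀ - ‖x‖⁻¹ • x‖ ≤ 2 * ‖x₀ - x‖ / (m / 2) :=
        aux_normalize_lip (by positivity) hx₀norm hxne
      rw [hux₀, dist_eq_norm]
      calc ‖‖x₀‖⁻¹ • x₀ - ‖x‖⁻¹ • x‖ ≤ 2 * ‖x₀ - x‖ / (m / 2) := hlip
        _ ≤ 2 * r' / (m / 2) := by gcongr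
        _ = 4 * r' / m := by field_simp; ring
  -- conclusion
  obtain ⟨N₁, hN₁⟩ := hgetA (m / 4) (by positivity)
  obtain ⟨N₂, hN₂⟩ := hgetB (m / 4) (by positivity)
  refine ⟨max N₁ N₂, fun n hn => hsep n
    (hN₁ n (le_of_lt (lt_of_le_of_lt (le_max_left _ _) hn)))
    (hN₂ n (le_of_lt (lt_of_le_of_lt (le_max_right _ _) hn))), ?_⟩
  rw [Metric.tendsto_atTop]
  intro ε hε
  set r' : ℝ := min (m / 4) (m * ε / 16) with hr'_def
  have hr'0 : 0 < r' := lt_min (by positivity) (by positivity)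
  obtain ⟨M₁, hM₁⟩ := hgetA r' hr'0
  obtain ⟨M₂, hM₂⟩ := hgetB r' hr'0
  refine ⟨max M₁ M₂, fun n hn => ?_⟩
  have h1 := hM₁ n (le_trans (le_max_left _ _) hn)
  have h2 := hM₂ n (le_trans (le_max_right _ _) hn)
  have hb := hkey n r' hr'0 (min_le_left _ _) h1 h2
  have hfinal : 4 * r' / m ≤ ε / 4 := by
    have : r' ≤ m * ε / 16 := min_le_right _ _
    rw [div_le_div_iff₀ hm0 (by norm_num : (0:ℝ) < 4)]
    nlinarith
  rw [Real.dist_eq, sub_zero, abs_of_nonneg hausdorffDist_nonneg]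
  linarith

end
end

section
/- Let g_{λ,k} be the projective automorphism of S^3 induced by the diagonal-plus-translation matrix with rows (λ,0,0,0), (0,1,0,k), (0,0,1/λ,0), (0,0,0,1), where λ > 1 and k ≥ 0. As λ, k → +∞ with k/λ → 0, the restriction of g_{λ,k} to the set {((x:y:z:t)) : x ≠ 0, t ≥ 0} converges, uniformly on compact subsets, to the map ((x:y:z:t)) ↦ ((sgn(x):0:0:0)); i.e., every compact subset of this set is eventually mapped into any given neighborhood of {e_1, −e_1}. -/
open Filter

noncomputable section

/-- The standard projective boost matrix with parameters (λ, k). -/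
def boostM (l k : ℝ) : Matrix (Fin 4) (Fin 4) ℝ :=
  !![l, 0, 0, 0; 0, 1, 0, k; 0, 0, l⁻¹, 0; 0, 0, 0, 1]

/-- Euclidean norm on ℝ⁴ (as `Fin 4 → ℝ`). -/
def enorm4 (v : Fin 4 → ℝ) : ℝ := Real.sqrt (∑ i, (v i) ^ 2)

/-- Normalization of a vector to the unit sphere, representing the induced
point of S³ = (ℝ⁴ ∖ {0})/ℝ₊. -/
def nmlz (v : Fin 4 → ℝ) : Fin 4 → ℝ := (enorm4 v)⁻¹ • v

def toE (v : Fin 4 → ℝ) : EuclideanSpace ℝ (Fin 4) := (WithLp.equiv 2 (Fin 4 → ℝ)).symm v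

lemma toE_sub (a b : Fin 4 → ℝ) : toE (a - b) = toE a - toE b := rfl
lemma toE_smul (c : ℝ) (v : Fin 4 → ℝ) : toE (c • v) = c • toE v := rfl
lemma toE_apply (v : Fin 4 → ℝ) (i : Fin 4) : toE v i = v i := rfl

lemma enorm4_eq (v : Fin 4 → ℝ) : enorm4 v = ‖toE v‖ := by
  rw [EuclideanSpace.norm_eq]
  simp [enorm4, toE_apply, sq_abs]

lemma boost_mulVec (l k : ℝ) (v : Fin 4 → ℝ) :
    (boostM l k).mulVec v = ![l * v 0, v 1 + k * v 3, l⁻¹ * v 2, v 3] := by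
  funext i
  fin_cases i <;>
    simp [boostM, Matrix.mulVec, dotProduct, Fin.sum_univ_four] <;> ring

lemma enorm4_def4 (v : Fin 4 → ℝ) :
    enorm4 v = Real.sqrt (v 0 ^ 2 + v 1 ^ 2 + v 2 ^ 2 + v 3 ^ 2) := by
  simp [enorm4, Fin.sum_univ_four]

lemma enorm4_smul (c : ℝ) (v : Fin 4 → ℝ) : enorm4 (c • v) = |c| * enorm4 v := by
  rw [enorm4_eq, enorm4_eq, toE_smul, norm_smul, Real.norm_eq_abs]

lemma nmlz_smul_pos {c : ℝ} (hc : 0 < c) (v : Fin 4 → ℝ) : nmlz (c • v) = nmlz v := by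
  unfold nmlz
  rw [enorm4_smul, abs_of_pos hc, smul_smul, mul_inv]
  congr 1
  rw [mul_right_comm, inv_mul_cancel₀ hc.ne', one_mul]

lemma key (u e : EuclideanSpace ℝ (Fin 4)) (he : ‖e‖ = 1) :
    ‖‖u‖⁻¹ • u - e‖ ≤ 4 * ‖u - e‖ := by
  by_cases h : ‖u - e‖ ≤ 1/2
  · have hr : (1:ℝ)/2 ≤ ‖u‖ := by
      have h2 : ‖e‖ - ‖u‖ ≤ ‖e - u‖ := norm_sub_norm_le e u
      rw [norm_sub_rev] at h2
      linarith
    have hu0 : ‖u‖ ≠ 0 := by positivity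
    have hrw : ‖u‖⁻¹ • u - e = ‖u‖⁻¹ • (u - ‖u‖ • e) := by
      rw [smul_sub, smul_smul, inv_mul_cancel₀ hu0, one_smul]
    rw [hrw, norm_smul, Real.norm_eq_abs, abs_of_nonneg (by positivity)]
    have h3 : ‖u - ‖u‖ • e‖ ≤ 2 * ‖u - e‖ := by
      have t1 : ‖u - ‖u‖ • e‖ ≤ ‖u - e‖ + ‖e - ‖u‖ • e‖ := by
        have := norm_add_le (u - e) (e - ‖u‖ • e)
        simpa using this
      have t2 : ‖e - ‖u‖ • e‖ = |1 - ‖u‖| := by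
        rw [show e - ‖u‖ • e = (1 - ‖u‖) • e by rw [sub_smul, one_smul], norm_smul,
          Real.norm_eq_abs, he, mul_one]
      have t3 : |1 - ‖u‖| ≤ ‖u - e‖ := by
        have := abs_norm_sub_norm_le e u
        rw [he, norm_sub_rev] at this
        exact this
      linarith
    have hinv : ‖u‖⁻¹ ≤ 2 := by
      rw [inv_le_comm₀ (by linarith) (by norm_num)]
      linarith
    calc ‖u‖⁻¹ * ‖u - ‖u‖ • e‖ ≤ 2 * (2 * ‖u - e‖) := by
          apply mul_le_mul hinv h3 (norm_nonneg _) (by norm_num)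
      _ = 4 * ‖u - e‖ := by ring
  · have h1 : ‖‖u‖⁻¹ • u‖ ≤ 1 := by
      rcases eq_or_ne u 0 with h0 | h0
      · simp [h0]
      · rw [norm_smul, Real.norm_eq_abs, abs_of_nonneg (by positivity),
          inv_mul_cancel₀ (norm_ne_zero_iff.2 h0)]
    have := norm_sub_le (‖u‖⁻¹ • u) e
    push_neg at h
    linarith [this, h]


set_option maxHeartbeats 1600000 in
/-- As λ, k → ∞ with k/λ → 0, the projective boosts g_{λ,k}
converge, uniformly on compact subsets of {((x:y:z:t)) : x ≠ 0, t ≥ 0} ⊆ S³,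
to the map ((x:y:z:t)) ↦ ((sgn x : 0 : 0 : 0)). -/
theorem stmt11 (lam kk : ℕ → ℝ)
    (hlam : ∀ n, 1 < lam n) (hkk : ∀ n, 0 ≤ kk n)
    (hlt : Tendsto lam atTop atTop) (hkt : Tendsto kk atTop atTop)
    (hratio : Tendsto (fun n => kk n / lam n) atTop (nhds 0))
    (K : Set (Fin 4 → ℝ)) (hKc : IsCompact K)
    (hK : K ⊆ {v | enorm4 v = 1 ∧ v 0 ≠ 0 ∧ 0 ≤ v 3}) :
    ∀ ε > 0, ∃ N : ℕ, ∀ n ≥ N, ∀ v ∈ K,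
      enorm4 (nmlz ((boostM (lam n) (kk n)).mulVec v) -
        (if 0 < v 0 then Pi.single 0 (1 : ℝ) else Pi.single 0 (-1 : ℝ))) < ε := by
  intro ε hε
  rcases K.eq_empty_or_nonempty with hKe | hKne
  · exact ⟨0, fun n _ v hv => by rw [hKe] at hv; exact absurd hv (Set.notMem_empty v)⟩
  obtain ⟨v₀, hv₀K, hmin⟩ := hKc.exists_isMinOn hKne
    ((continuous_abs.comp (continuous_apply 0)).continuousOn)
  set c : ℝ := |v₀ 0| with hcdef
  have hc0 : 0 < c := abs_pos.2 (hK hv₀K).2.1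
  have hcle : ∀ v ∈ K, c ≤ |v 0| := fun v hv => hmin hv
  -- coordinate bounds on K
  have hbound : ∀ v ∈ K, ∀ i, |v i| ≤ 1 := by
    intro v hv i
    have h1 : ∑ j, (v j) ^ 2 = 1 := by
      have hvn := (hK hv).1
      rw [enorm4] at hvn
      have hnn : 0 ≤ ∑ j, (v j) ^ 2 := Finset.sum_nonneg fun j _ => sq_nonneg _
      nlinarith [Real.sq_sqrt hnn]
    have h2 : (v i) ^ 2 ≤ 1 := by
      rw [← h1]
      exact Finset.single_le_sum (fun j _ => sq_nonneg (v j)) (Finset.mem_univ i)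
    nlinarith [abs_nonneg (v i), sq_abs (v i)]
  -- the ratio (k+2)/l tends to 0
  have h2l : Tendsto (fun n => (kk n + 2) / lam n) atTop (nhds 0) := by
    have h2 : Tendsto (fun n => (2 : ℝ) / lam n) atTop (nhds 0) :=
      tendsto_const_nhds.div_atTop hlt
    have hsum := hratio.add h2
    rw [add_zero] at hsum
    exact hsum.congr fun n => by rw [← add_div]
  have hev : ∀ᶠ n in atTop, (kk n + 2) / lam n < ε * c / 8 :=
    h2l.eventually (eventually_lt_nhds (by positivity))
  rcases eventually_atTop.mp hev with ⟨N, hN⟩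
  refine ⟨N, fun n hn v hv => ?_⟩
  obtain ⟨hv1, hvx, hvt⟩ := hK hv
  set l : ℝ := lam n with hldef
  set k : ℝ := kk n with hkdef
  have hl : 1 < l := hlam n
  have hl0 : 0 < l := by linarith
  have hk : 0 ≤ k := hkk n
  have hcx : c ≤ |v 0| := hcle v hv
  have hx0 : 0 < |v 0| := lt_of_lt_of_le hc0 hcx
  set s : ℝ := if 0 < v 0 then (1 : ℝ) else -1 with hs
  have hif : (if 0 < v 0 then Pi.single 0 (1 : ℝ) else Pi.single 0 (-1 : ℝ))
      = (Pi.single 0 s : Fin 4 → ℝ) := by rw [hs]; split_ifs <;> rfl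
  set e : Fin 4 → ℝ := Pi.single 0 s with hedef
  have hs2 : s ^ 2 = 1 := by rw [hs]; split_ifs <;> norm_num
  have he0 : e 0 = s := by rw [hedef]; simp
  have he1 : e 1 = 0 := by rw [hedef]; simp [Pi.single_eq_of_ne (show (1:Fin 4) ≠ 0 by decide)]
  have he2 : e 2 = 0 := by rw [hedef]; simp [Pi.single_eq_of_ne (show (2:Fin 4) ≠ 0 by decide)]
  have he3 : e 3 = 0 := by rw [hedef]; simp [Pi.single_eq_of_ne (show (3:Fin 4) ≠ 0 by decide)]
  have heN : enorm4 e = 1 := by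
    rw [enorm4_def4, he0, he1, he2, he3]
    rw [show s ^ 2 + 0 ^ 2 + 0 ^ 2 + 0 ^ 2 = 1 by rw [hs2]; ring, Real.sqrt_one]
  set A : ℝ := (l * |v 0|)⁻¹ with hAdef
  have hA : 0 < A := by positivity
  set u : Fin 4 → ℝ := A • (boostM l k).mulVec v with hu
  have hnm : nmlz ((boostM l k).mulVec v) = nmlz u := (nmlz_smul_pos hA _).symm
  have hMv : (boostM l k).mulVec v = ![l * v 0, v 1 + k * v 3, l⁻¹ * v 2, v 3] :=
    boost_mulVec l k v
  have hu0 : u 0 = A * (l * v 0) := by rw [hu, hMv]; rfl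
  have hu1 : u 1 = A * (v 1 + k * v 3) := by rw [hu, hMv]; rfl
  have hu2 : u 2 = A * (l⁻¹ * v 2) := by rw [hu, hMv]; rfl
  have hu3 : u 3 = A * v 3 := by rw [hu, hMv]; rfl
  have hg0 : u 0 - e 0 = 0 := by
    rw [hu0, he0, hAdef, hs]
    split_ifs with hxp
    · rw [abs_of_pos hxp]; field_simp; ring
    · have hxn : v 0 < 0 := lt_of_le_of_ne (not_lt.mp hxp) hvx
      rw [abs_of_neg hxn]; field_simp; ring
  clear_value u A
  set B : ℝ := (k + 2) / (l * c) with hBdef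
  have hB0 : 0 < B := by positivity
  have hAB : A ≤ B := by
    rw [hAdef, hBdef, inv_eq_one_div]
    exact div_le_div₀ (by linarith) (by linarith) (by positivity)
      (mul_le_mul_of_nonneg_left hcx hl0.le)
  have hb1 : |u 1 - e 1| ≤ B := by
    rw [he1, sub_zero, hu1, abs_mul, abs_of_pos hA]
    have m1 : |v 1 + k * v 3| ≤ 1 + k := by
      calc |v 1 + k * v 3| ≤ |v 1| + |k * v 3| := abs_add_le _ _
        _ = |v 1| + k * |v 3| := by rw [abs_mul, abs_of_nonneg hk]
        _ ≤ 1 + k * 1 := by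
            have := hbound v hv 1
            have := hbound v hv 3
            gcongr <;> assumption
        _ = 1 + k := by ring
    calc A * |v 1 + k * v 3| ≤ A * (1 + k) := by gcongr
      _ = (1 + k) / (l * |v 0|) := by rw [mul_comm, hAdef, div_eq_mul_inv]
      _ ≤ (k + 2) / (l * c) := div_le_div₀ (by linarith) (by linarith) (by positivity)
          (mul_le_mul_of_nonneg_left hcx hl0.le)
  have hb2 : |u 2 - e 2| ≤ B := by
    rw [he2, sub_zero, hu2, abs_mul, abs_mul, abs_of_pos hA,
      abs_of_pos (inv_pos.2 hl0)]
    have hz := hbound v hv 2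
    have hli : l⁻¹ ≤ 1 := by
      rw [inv_le_one_iff₀]; right; linarith
    calc A * (l⁻¹ * |v 2|) ≤ A * (1 * 1) := by gcongr
      _ = A := by ring
      _ ≤ B := hAB
  have hb3 : |u 3 - e 3| ≤ B := by
    rw [he3, sub_zero, hu3, abs_mul, abs_of_pos hA]
    have ht := hbound v hv 3
    calc A * |v 3| ≤ A * 1 := by gcongr
      _ = A := by ring
      _ ≤ B := hAB
  have hue : enorm4 (u - e) ≤ 2 * B := by
    rw [enorm4_def4]
    have q1 : (u 1 - e 1) ^ 2 ≤ B ^ 2 := by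
      have := pow_le_pow_left₀ (abs_nonneg _) hb1 2
      rwa [sq_abs] at this
    have q2 : (u 2 - e 2) ^ 2 ≤ B ^ 2 := by
      have := pow_le_pow_left₀ (abs_nonneg _) hb2 2
      rwa [sq_abs] at this
    have q3 : (u 3 - e 3) ^ 2 ≤ B ^ 2 := by
      have := pow_le_pow_left₀ (abs_nonneg _) hb3 2
      rwa [sq_abs] at this
    have hsum : (u - e) 0 ^ 2 + (u - e) 1 ^ 2 + (u - e) 2 ^ 2 + (u - e) 3 ^ 2
        ≤ (2 * B) ^ 2 := by
      have e0 : (u - e) 0 = 0 := hg0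
      have e1 : (u - e) 1 = u 1 - e 1 := rfl
      have e2 : (u - e) 2 = u 2 - e 2 := rfl
      have e3 : (u - e) 3 = u 3 - e 3 := rfl
      rw [e0, e1, e2, e3]
      nlinarith [sq_nonneg B]
    calc Real.sqrt ((u - e) 0 ^ 2 + (u - e) 1 ^ 2 + (u - e) 2 ^ 2 + (u - e) 3 ^ 2)
        ≤ Real.sqrt ((2 * B) ^ 2) := Real.sqrt_le_sqrt hsum
      _ = 2 * B := Real.sqrt_sq (by positivity)
  -- put everything together
  have hmain : enorm4 (nmlz ((boostM l k).mulVec v) - e) ≤ 4 * (2 * B) := by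
    rw [hnm]
    have hkey : enorm4 (nmlz u - e) ≤ 4 * enorm4 (u - e) := by
      rw [enorm4_eq (nmlz u - e), enorm4_eq (u - e), toE_sub, toE_sub]
      have htn : toE (nmlz u) = ‖toE u‖⁻¹ • toE u := by
        rw [nmlz, toE_smul, enorm4_eq]
      rw [htn]
      exact key (toE u) (toE e) (by rw [← enorm4_eq, heN])
    calc enorm4 (nmlz u - e) ≤ 4 * enorm4 (u - e) := hkey
      _ ≤ 4 * (2 * B) := by linarith
  have hBsmall : B < ε / 8 := by
    have hn' : (k + 2) / l < ε * c / 8 := hN n hn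
    rw [hBdef, ← div_div, div_lt_iff₀ hc0]
    calc (k + 2) / l < ε * c / 8 := hn'
      _ = ε / 8 * c := by ring
  rw [hif]
  calc enorm4 (nmlz ((boostM l k).mulVec v) - e) ≤ 4 * (2 * B) := hmain
    _ < ε := by linarith

end
end

section
/- The conjugacy class in Isom^+(E) of an affine boost γ is completely determined by the pair (ℓ, α) ∈ R_{>0} × (R \ {0}): two affine boosts with the same ℓ (translation length of the linear part on H^2, equivalently with linear parts having the same eigenvalue e^ℓ) and the same Margulis invariant α are conjugate by an orientation-preserving Lorentz isometry. -/
open Matrix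

noncomputable section

/-- The Lorentz form of signature (2,1) on ℝ³. -/
def lorB (x y : Fin 3 → ℝ) : ℝ := x 0 * y 0 + x 1 * y 1 - x 2 * y 2

/-- The standard Lorentz form matrix of signature (2,1) on ℝ³. -/
def J3 : Matrix (Fin 3) (Fin 3) ℝ := !![1, 0, 0; 0, 1, 0; 0, 0, -1]

/-- Gram matrix of a normalized frame (v₊, v₀, v₋). -/
def Bmat : Matrix (Fin 3) (Fin 3) ℝ := !![0, 0, -1; 0, 1, 0; -1, 0, 0]

lemma lorB_dot (x y : Fin 3 → ℝ) : x ⬝ᵥ J3.mulVec y = lorB x y := by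
  simp [lorB, J3, Matrix.mulVec, dotProduct, Fin.sum_univ_three, Matrix.vecHead, Matrix.vecTail]
  ring

lemma lorB_mulVec (g C : Matrix (Fin 3) (Fin 3) ℝ) (h : gᵀ * J3 * g = C)
    (x y : Fin 3 → ℝ) : lorB (g.mulVec x) (g.mulVec y) = x ⬝ᵥ C.mulVec y := by
  have e : ∀ i j, (gᵀ * J3 * g) i j = C i j := fun i j => by rw [h]
  have h00 := e 0 0; have h01 := e 0 1; have h02 := e 0 2
  have h10 := e 1 0; have h11 := e 1 1; have h12 := e 1 2
  have h20 := e 2 0; have h21 := e 2 1; have h22 := e 2 2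
  simp [Matrix.mul_apply, Matrix.transpose_apply, J3, Fin.sum_univ_three, Matrix.vecHead, Matrix.vecTail] at h00 h01 h02 h10 h11 h12 h20 h21 h22
  simp [lorB, Matrix.mulVec, dotProduct, Fin.sum_univ_three]
  linear_combination (x 0 * y 0) * h00 + (x 0 * y 1) * h01 + (x 0 * y 2) * h02 +
    (x 1 * y 0) * h10 + (x 1 * y 1) * h11 + (x 1 * y 2) * h12 +
    (x 2 * y 0) * h20 + (x 2 * y 1) * h21 + (x 2 * y 2) * h22

lemma lorB_sub_left (x y z : Fin 3 → ℝ) : lorB (x - y) z = lorB x z - lorB y z := by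
  simp [lorB]; ring

set_option maxHeartbeats 1000000 in
/-- Normalized frame for a boost. -/
lemma boost_frame (E F : ℝ) (hE : 1 < E) (hF : F < 1) (hF0 : 0 < F) (hEF : E * F = 1)
    (g : Matrix (Fin 3) (Fin 3) ℝ) (vp vm v0 : Fin 3 → ℝ)
    (hform : gᵀ * J3 * g = J3)
    (hp : g.mulVec vp = E • vp) (hp0 : vp ≠ 0)
    (hm : g.mulVec vm = F • vm)
    (h0 : g.mulVec v0 = v0) (hu : lorB v0 v0 = 1)
    (hcaus : (0 < vp 2 ∧ 0 < vm 2) ∨ (vp 2 < 0 ∧ vm 2 < 0))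
    (hor : 0 < Matrix.det !![vp 0, v0 0, vm 0; vp 1, v0 1, vm 1; vp 2, v0 2, vm 2]) :
    ∃ M : Matrix (Fin 3) (Fin 3) ℝ, M.det = 1 ∧
      g * M = M * !![E, 0, 0; 0, 1, 0; 0, 0, F] ∧
      Mᵀ * J3 * M = Bmat ∧ M.mulVec ![0, 1, 0] = v0 := by
  have pair : ∀ (s t : ℝ) (x y : Fin 3 → ℝ), g.mulVec x = s • x → g.mulVec y = t • y →
      s * t ≠ 1 → lorB x y = 0 := by
    intro s t x y hx hy hst
    have h1 : lorB (g.mulVec x) (g.mulVec y) = lorB x y := by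
      rw [lorB_mulVec g J3 hform, lorB_dot]
    rw [hx, hy] at h1
    have h2 : (s * t - 1) * lorB x y = 0 := by
      simp only [lorB, Pi.smul_apply, smul_eq_mul] at h1 ⊢
      linear_combination h1
    rcases mul_eq_zero.mp h2 with h | h
    · exact absurd (by linarith) hst
    · exact h
  have h0' : g.mulVec v0 = (1 : ℝ) • v0 := by rw [h0, one_smul]
  have hpp : lorB vp vp = 0 := pair E E vp vp hp hp (by nlinarith)
  have hmm : lorB vm vm = 0 := pair F F vm vm hm hm (by nlinarith)
  have hpv0 : lorB vp v0 = 0 := pair E 1 vp v0 hp h0' (by nlinarith)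
  have hmv0 : lorB vm v0 = 0 := pair F 1 vm v0 hm h0' (by nlinarith)
  have hpp' : vp 0 * vp 0 + vp 1 * vp 1 - vp 2 * vp 2 = 0 := hpp
  have hmm' : vm 0 * vm 0 + vm 1 * vm 1 - vm 2 * vm 2 = 0 := hmm
  have hpv0' : vp 0 * v0 0 + vp 1 * v0 1 - vp 2 * v0 2 = 0 := hpv0
  have hmv0' : vm 0 * v0 0 + vm 1 * v0 1 - vm 2 * v0 2 = 0 := hmv0
  have hu' : v0 0 * v0 0 + v0 1 * v0 1 - v0 2 * v0 2 = 1 := hu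
  have hNdet : Matrix.det !![vp 0, v0 0, vm 0; vp 1, v0 1, vm 1; vp 2, v0 2, vm 2] ≠ 0 :=
    ne_of_gt hor
  have hne : lorB vp vm ≠ 0 := by
    intro hzero
    have hzero' : vp 0 * vm 0 + vp 1 * vm 1 - vp 2 * vm 2 = 0 := hzero
    set N : Matrix (Fin 3) (Fin 3) ℝ :=
      !![vp 0, v0 0, vm 0; vp 1, v0 1, vm 1; vp 2, v0 2, vm 2] with hN
    have hNu : IsUnit Nᵀ.det := by
      rw [Matrix.det_transpose]; exact (isUnit_iff_ne_zero).2 hNdet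
    have hy : Nᵀ.mulVec ![vp 0, vp 1, -vp 2] = 0 := by
      funext i
      fin_cases i
      · simp [hN, Matrix.mulVec, dotProduct, Fin.sum_univ_three]
        linear_combination hpp'
      · simp [hN, Matrix.mulVec, dotProduct, Fin.sum_univ_three]
        linear_combination hpv0'
      · simp [hN, Matrix.mulVec, dotProduct, Fin.sum_univ_three]
        linear_combination hzero'
    have hz : ![vp 0, vp 1, -vp 2] = 0 := by
      have h2 := congrArg (fun z => (Nᵀ)⁻¹.mulVec z) hy
      simp only [Matrix.mulVec_mulVec, Matrix.nonsing_inv_mul _ hNu, Matrix.one_mulVec,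
        Matrix.mulVec_zero] at h2
      exact h2
    apply hp0
    have e0 := congrFun hz 0
    have e1 := congrFun hz 1
    have e2 := congrFun hz 2
    simp at e0 e1 e2
    funext i
    fin_cases i
    · simpa using e0
    · simpa using e1
    · simpa using e2
  have hle : lorB vp vm ≤ 0 := by
    simp only [lorB]
    rcases hcaus with ⟨h1, h2⟩ | ⟨h1, h2⟩
    · nlinarith [sq_nonneg (vp 0 * vm 1 - vp 1 * vm 0), mul_pos h1 h2,
        sq_nonneg (vp 0 * vm 0 + vp 1 * vm 1)]
    · nlinarith [sq_nonneg (vp 0 * vm 1 - vp 1 * vm 0), mul_pos_of_neg_of_neg h1 h2,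
        sq_nonneg (vp 0 * vm 0 + vp 1 * vm 1)]
  set κ : ℝ := -(lorB vp vm) with hκdef
  have hκ : 0 < κ := by
    have h1 : lorB vp vm < 0 := lt_of_le_of_ne hle hne
    rw [hκdef]; linarith
  have hκ0 : κ ≠ 0 := ne_of_gt hκ
  have hvm' : vp 0 * vm 0 + vp 1 * vm 1 - vp 2 * vm 2 = -κ := by
    have : lorB vp vm = -κ := by rw [hκdef]; ring
    exact this
  set M : Matrix (Fin 3) (Fin 3) ℝ := Matrix.of fun r => ![vp r, v0 r, κ⁻¹ * vm r] with hM
  have hGram : Mᵀ * J3 * M = Bmat := by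
    ext i j
    fin_cases i <;> fin_cases j
    · simp [hM, Bmat, J3, Matrix.mul_apply, Fin.sum_univ_three, Matrix.vecHead, Matrix.vecTail]
      linear_combination hpp'
    · simp [hM, Bmat, J3, Matrix.mul_apply, Fin.sum_univ_three, Matrix.vecHead, Matrix.vecTail]
      linear_combination hpv0'
    · simp [hM, Bmat, J3, Matrix.mul_apply, Fin.sum_univ_three, Matrix.vecHead, Matrix.vecTail]
      field_simp
      linear_combination hvm'
    · simp [hM, Bmat, J3, Matrix.mul_apply, Fin.sum_univ_three, Matrix.vecHead, Matrix.vecTail]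
      linear_combination hpv0'
    · simp [hM, Bmat, J3, Matrix.mul_apply, Fin.sum_univ_three, Matrix.vecHead, Matrix.vecTail]
      linear_combination hu'
    · simp [hM, Bmat, J3, Matrix.mul_apply, Fin.sum_univ_three, Matrix.vecHead, Matrix.vecTail]
      field_simp
      linear_combination hmv0'
    · simp [hM, Bmat, J3, Matrix.mul_apply, Fin.sum_univ_three, Matrix.vecHead, Matrix.vecTail]
      field_simp
      linear_combination hvm'
    · simp [hM, Bmat, J3, Matrix.mul_apply, Fin.sum_univ_three, Matrix.vecHead, Matrix.vecTail]
      field_simp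
      linear_combination hmv0'
    · simp [hM, Bmat, J3, Matrix.mul_apply, Fin.sum_univ_three, Matrix.vecHead, Matrix.vecTail]
      field_simp
      linear_combination hmm'
  have hdetM : M.det = 1 := by
    have h := congrArg Matrix.det hGram
    rw [Matrix.det_mul, Matrix.det_mul, Matrix.det_transpose] at h
    have hJ : J3.det = -1 := by simp [J3, Matrix.det_fin_three]
    have hB : Bmat.det = -1 := by simp [Bmat, Matrix.det_fin_three]
    rw [hJ, hB] at h
    have hdet2 : M.det * M.det = 1 := by linear_combination -h
    have hpos : 0 < M.det := by
      have hcalc : M.det = κ⁻¹ *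
          Matrix.det !![vp 0, v0 0, vm 0; vp 1, v0 1, vm 1; vp 2, v0 2, vm 2] := by
        simp [hM, Matrix.det_fin_three, Matrix.vecHead, Matrix.vecTail]
        ring
      rw [hcalc]
      exact mul_pos (inv_pos.2 hκ) hor
    nlinarith [hdet2, hpos]
  refine ⟨M, hdetM, ?_, hGram, ?_⟩
  · ext r c
    fin_cases c
    · have h1 := congrFun hp r
      simp only [Matrix.mulVec, dotProduct, Fin.sum_univ_three, Pi.smul_apply,
        smul_eq_mul] at h1
      simp [hM, Matrix.mul_apply, Fin.sum_univ_three, Matrix.vecHead, Matrix.vecTail]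
      linear_combination h1
    · have h1 := congrFun h0 r
      simp only [Matrix.mulVec, dotProduct, Fin.sum_univ_three] at h1
      simp [hM, Matrix.mul_apply, Fin.sum_univ_three, Matrix.vecHead, Matrix.vecTail]
      linear_combination h1
    · have h1 := congrFun hm r
      simp only [Matrix.mulVec, dotProduct, Fin.sum_univ_three, Pi.smul_apply,
        smul_eq_mul] at h1
      simp [hM, Matrix.mul_apply, Fin.sum_univ_three, Matrix.vecHead, Matrix.vecTail]
      linear_combination κ⁻¹ * h1
  · funext r
    simp [hM, Matrix.mulVec, dotProduct, Fin.sum_univ_three]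

set_option maxHeartbeats 1000000 in
/-- Two affine boosts with the same eigenvalue parameter e^ℓ of
the linear part and the same Margulis invariant α are conjugate in Isom⁺(E),
the group of orientation-preserving Lorentz isometries.  Here each boost
γᵢ(p) = gᵢ p + bᵢ has linear part gᵢ ∈ SO(2,1) with null eigenvectors vpᵢ, vmᵢ
(eigenvalues e^ℓ, e^{−ℓ}) of the same causal character, unit spacelike neutral
eigenvector v0ᵢ making (vpᵢ, v0ᵢ, vmᵢ) positively oriented, Margulis invariant
lorB bᵢ v0ᵢ = α, and acts freely. -/
theorem stmt15 (l a : ℝ) (hl : 0 < l) (ha : a ≠ 0)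
    (g₁ g₂ : Matrix (Fin 3) (Fin 3) ℝ) (b₁ b₂ : Fin 3 → ℝ)
    (vp₁ vm₁ v0₁ vp₂ vm₂ v0₂ : Fin 3 → ℝ)
    (hform₁ : g₁ᵀ * J3 * g₁ = J3) (hdet₁ : g₁.det = 1)
    (hform₂ : g₂ᵀ * J3 * g₂ = J3) (hdet₂ : g₂.det = 1)
    (hp₁ : g₁.mulVec vp₁ = Real.exp l • vp₁) (hp₁0 : vp₁ ≠ 0)
    (hm₁ : g₁.mulVec vm₁ = Real.exp (-l) • vm₁) (hm₁0 : vm₁ ≠ 0)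
    (h0₁ : g₁.mulVec v0₁ = v0₁) (hu₁ : lorB v0₁ v0₁ = 1)
    (hp₂ : g₂.mulVec vp₂ = Real.exp l • vp₂) (hp₂0 : vp₂ ≠ 0)
    (hm₂ : g₂.mulVec vm₂ = Real.exp (-l) • vm₂) (hm₂0 : vm₂ ≠ 0)
    (h0₂ : g₂.mulVec v0₂ = v0₂) (hu₂ : lorB v0₂ v0₂ = 1)
    (hcaus₁ : (0 < vp₁ 2 ∧ 0 < vm₁ 2) ∨ (vp₁ 2 < 0 ∧ vm₁ 2 < 0))
    (hcaus₂ : (0 < vp₂ 2 ∧ 0 < vm₂ 2) ∨ (vp₂ 2 < 0 ∧ vm₂ 2 < 0))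
    (hor₁ : 0 < Matrix.det !![vp₁ 0, v0₁ 0, vm₁ 0;
                              vp₁ 1, v0₁ 1, vm₁ 1;
                              vp₁ 2, v0₁ 2, vm₁ 2])
    (hor₂ : 0 < Matrix.det !![vp₂ 0, v0₂ 0, vm₂ 0;
                              vp₂ 1, v0₂ 1, vm₂ 1;
                              vp₂ 2, v0₂ 2, vm₂ 2])
    (hmu₁ : lorB b₁ v0₁ = a) (hmu₂ : lorB b₂ v0₂ = a)
    (hfree₁ : ∀ p : Fin 3 → ℝ, g₁.mulVec p + b₁ ≠ p)
    (hfree₂ : ∀ p : Fin 3 → ℝ, g₂.mulVec p + b₂ ≠ p) :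
    ∃ (L : Matrix (Fin 3) (Fin 3) ℝ) (c : Fin 3 → ℝ),
      Lᵀ * J3 * L = J3 ∧ L.det = 1 ∧
      ∀ p : Fin 3 → ℝ,
        L.mulVec (g₁.mulVec p + b₁) + c = g₂.mulVec (L.mulVec p + c) + b₂ := by
  set E := Real.exp l with hEdef
  set F := Real.exp (-l) with hFdef
  have hE : 1 < E := Real.one_lt_exp_iff.2 hl
  have hF : F < 1 := Real.exp_lt_one_iff.2 (by linarith)
  have hF0 : 0 < F := Real.exp_pos _
  have hEF : E * F = 1 := by rw [hEdef, hFdef, ← Real.exp_add]; simp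
  obtain ⟨M₁, hd₁, hg₁, hJ₁, he₁⟩ :=
    boost_frame E F hE hF hF0 hEF g₁ vp₁ vm₁ v0₁ hform₁ hp₁ hp₁0 hm₁ h0₁ hu₁ hcaus₁ hor₁
  obtain ⟨M₂, hd₂, hg₂, hJ₂, he₂⟩ :=
    boost_frame E F hE hF hF0 hEF g₂ vp₂ vm₂ v0₂ hform₂ hp₂ hp₂0 hm₂ h0₂ hu₂ hcaus₂ hor₂
  have hu1 : IsUnit M₁.det := by rw [hd₁]; exact isUnit_one
  have hu2 : IsUnit M₂.det := by rw [hd₂]; exact isUnit_one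
  have hM₁r : M₁ * M₁⁻¹ = 1 := Matrix.mul_nonsing_inv _ hu1
  have hM₁l : M₁⁻¹ * M₁ = 1 := Matrix.nonsing_inv_mul _ hu1
  have hM₂r : M₂ * M₂⁻¹ = 1 := Matrix.mul_nonsing_inv _ hu2
  set D : Matrix (Fin 3) (Fin 3) ℝ := !![E, 0, 0; 0, 1, 0; 0, 0, F] with hD
  set L : Matrix (Fin 3) (Fin 3) ℝ := M₂ * M₁⁻¹ with hL
  have h1t : M₁⁻¹ᵀ * M₁ᵀ = 1 := by rw [← Matrix.transpose_mul, hM₁r, Matrix.transpose_one]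
  have hLJ : Lᵀ * J3 * L = J3 := by
    have step : Lᵀ * J3 * L = M₁⁻¹ᵀ * (M₂ᵀ * J3 * M₂) * M₁⁻¹ := by
      simp only [hL, Matrix.transpose_mul, Matrix.mul_assoc]
    rw [step, hJ₂, ← hJ₁,
      show M₁⁻¹ᵀ * (M₁ᵀ * J3 * M₁) * M₁⁻¹ = (M₁⁻¹ᵀ * M₁ᵀ) * J3 * (M₁ * M₁⁻¹) by
        simp only [Matrix.mul_assoc],
      h1t, hM₁r, Matrix.one_mul, Matrix.mul_one]
  have hdetL : L.det = 1 := by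
    rw [hL, Matrix.det_mul, hd₂, Matrix.det_nonsing_inv, hd₁]
    simp
  have hA : M₁⁻¹ * g₁ = D * M₁⁻¹ := by
    calc M₁⁻¹ * g₁ = M₁⁻¹ * g₁ * (M₁ * M₁⁻¹) := by rw [hM₁r, Matrix.mul_one]
      _ = M₁⁻¹ * (g₁ * M₁ * M₁⁻¹) := by simp only [Matrix.mul_assoc]
      _ = M₁⁻¹ * (M₁ * D * M₁⁻¹) := by rw [hg₁]
      _ = (M₁⁻¹ * M₁) * D * M₁⁻¹ := by simp only [Matrix.mul_assoc]
      _ = D * M₁⁻¹ := by rw [hM₁l, Matrix.one_mul]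
  have hcomm : L * g₁ = g₂ * L := by
    calc L * g₁ = M₂ * (M₁⁻¹ * g₁) := by rw [hL, Matrix.mul_assoc]
      _ = M₂ * (D * M₁⁻¹) := by rw [hA]
      _ = (M₂ * D) * M₁⁻¹ := by rw [Matrix.mul_assoc]
      _ = (g₂ * M₂) * M₁⁻¹ := by rw [hg₂]
      _ = g₂ * L := by rw [hL, Matrix.mul_assoc]
  have hLv0 : L.mulVec v0₁ = v0₂ := by
    have h1 : M₁⁻¹.mulVec v0₁ = ![0, 1, 0] := by
      rw [← he₁, Matrix.mulVec_mulVec, hM₁l, Matrix.one_mulVec]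
    rw [hL, ← Matrix.mulVec_mulVec, h1, he₂]
  set w : Fin 3 → ℝ := L.mulVec b₁ - b₂ with hw
  set u : Fin 3 → ℝ := M₂⁻¹.mulVec w with hu
  have hMu : M₂.mulVec u = w := by
    rw [hu, Matrix.mulVec_mulVec, hM₂r, Matrix.one_mulVec]
  have hwv : lorB w v0₂ = 0 := by
    have hl1 : lorB (L.mulVec b₁) v0₂ = a := by
      rw [← hLv0, lorB_mulVec L J3 hLJ, lorB_dot, hmu₁]
    rw [hw, lorB_sub_left, hl1, hmu₂, sub_self]
  have hu1' : u 1 = 0 := by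
    have h := lorB_mulVec M₂ Bmat hJ₂ u ![0, 1, 0]
    rw [hMu, he₂, hwv] at h
    have h2 : u ⬝ᵥ Bmat.mulVec ![0, 1, 0] = u 1 := by
      simp [Bmat, Matrix.mulVec, dotProduct, Fin.sum_univ_three, Matrix.vecHead, Matrix.vecTail]
    rw [h2] at h
    exact h.symm
  set t : Fin 3 → ℝ := ![u 0 / (E - 1), 0, u 2 / (F - 1)] with ht
  set c : Fin 3 → ℝ := M₂.mulVec t with hc
  have hE1 : E - 1 ≠ 0 := by intro h; nlinarith
  have hF1 : F - 1 ≠ 0 := by intro h; nlinarith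
  have hDt : D.mulVec t - t = u := by
    funext i
    fin_cases i
    · simp [hD, ht, Matrix.mulVec, dotProduct, Fin.sum_univ_three, Matrix.vecHead, Matrix.vecTail]
      field_simp
    · simp [hD, ht, Matrix.mulVec, dotProduct, Fin.sum_univ_three, Matrix.vecHead, Matrix.vecTail]
      exact hu1'.symm
    · simp [hD, ht, Matrix.mulVec, dotProduct, Fin.sum_univ_three, Matrix.vecHead, Matrix.vecTail]
      field_simp
  have hkey : g₂.mulVec c - c = w := by
    have h1 : g₂.mulVec c = M₂.mulVec (D.mulVec t) := by
      rw [hc, Matrix.mulVec_mulVec, hg₂, ← Matrix.mulVec_mulVec]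
    rw [h1, hc, ← Matrix.mulVec_sub, hDt, hMu]
  refine ⟨L, c, hLJ, hdetL, fun p => ?_⟩
  have hg2c : g₂.mulVec c = L.mulVec b₁ - b₂ + c := by
    have h := hkey
    rw [hw] at h
    linear_combination h
  rw [Matrix.mulVec_add, Matrix.mulVec_add, Matrix.mulVec_mulVec, Matrix.mulVec_mulVec,
    hcomm, hg2c]
  abel
end
end
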